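/- Under the same hypotheses, the reduced resolvent S(s) = lim_{z→0} Q(s)(L(s) − z)⁻¹ Q(s), where Q(s) = Id − P(s), also satisfies S^(j)(s₀) = 0 for j = 1,...,k whenever L^(j)(s₀) = 0 for j = 1,...,k. -/

import Mathlib

attribute [local instance] Matrix.frobeniusNormedAddCommGroup Matrix.frobeniusNormedSpace

/-- The trace norm (sum of singular values, i.e. of the square roots of the eigenvalues
of `Aᴴ * A`) of a complex square matrix. -/
noncomputable def traceNorm {m : Type*} [Fintype m] [DecidableEq m]
    (A : Matrix m m ℂ) : ℝ :=
  ∑ i, Real.sqrt ((Matrix.isHermitian_mul_conjTranspose_self A.conjTranspose).eigenvalues i)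

noncomputable instance matrixCLMNormedAddCommGroup {n : ℕ} :
    NormedAddCommGroup (Matrix (Fin n) (Fin n) ℂ →L[ℂ] Matrix (Fin n) (Fin n) ℂ) :=
  ContinuousLinearMap.toNormedAddCommGroup

noncomputable instance matrixCLMNormedSpace {n : ℕ} :
    NormedSpace ℂ (Matrix (Fin n) (Fin n) ℂ →L[ℂ] Matrix (Fin n) (Fin n) ℂ) :=
  ContinuousLinearMap.toNormedSpace

open Filter Set MeasureTheory Metric Complex Topology intervalIntegral

set_option linter.unusedSectionVars false
set_option linter.unusedVariables false


section VanHelpers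
variable {F G H : Type*} [NormedAddCommGroup F] [NormedSpace ℝ F]
  [NormedAddCommGroup G] [NormedSpace ℝ G] [NormedAddCommGroup H] [NormedSpace ℝ H]
  {x₀ : ℝ}

lemma iteratedDeriv_congr_nhds {f g : ℝ → F} {n : ℕ} (h : f =ᶠ[𝓝 x₀] g) :
    iteratedDeriv n f x₀ = iteratedDeriv n g x₀ := by
  simp only [iteratedDeriv, ← iteratedFDerivWithin_univ]
  rw [(h.filter_mono nhdsWithin_le_nhds).iteratedFDerivWithin_eq h.eq_of_nhds n]

lemma contDiffAt_deriv {f : ℝ → F} {n : ℕ} (hf : ContDiffAt ℝ (n + 1) f x₀) :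
    ContDiffAt ℝ n (deriv f) x₀ := by
  obtain ⟨u, hu, hcd⟩ := hf.contDiffOn (le_refl _) (by simp)
  obtain ⟨t, htu, ht, hxt⟩ := _root_.mem_nhds_iff.1 hu
  have : ContDiffOn ℝ n (deriv f) t :=
    (hcd.mono htu).deriv_of_isOpen ht (by exact_mod_cast le_refl _)
  exact (this.contDiffAt (ht.mem_nhds hxt))

lemma iteratedDeriv_add_at {f g : ℝ → F} {n : ℕ} (hf : ContDiffAt ℝ n f x₀)
    (hg : ContDiffAt ℝ n g x₀) :
    iteratedDeriv n (fun s => f s + g s) x₀ = iteratedDeriv n f x₀ + iteratedDeriv n g x₀ := by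
  obtain ⟨u, hu, hcdf⟩ := hf.contDiffOn (le_refl _) (by simp)
  obtain ⟨v, hv, hcdg⟩ := hg.contDiffOn (le_refl _) (by simp)
  obtain ⟨t, htu, ht, hxt⟩ := _root_.mem_nhds_iff.1 (inter_mem hu hv)
  have h1 : iteratedDeriv n (fun s => f s + g s) x₀
      = iteratedDerivWithin n (fun s => f s + g s) t x₀ := by
    simp only [iteratedDeriv, iteratedDerivWithin, ← iteratedFDerivWithin_univ]
    rw [iteratedFDerivWithin_of_isOpen n ht hxt, iteratedFDerivWithin_univ]
  have h2 : iteratedDeriv n f x₀ = iteratedDerivWithin n f t x₀ := by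
    simp only [iteratedDeriv, iteratedDerivWithin, ← iteratedFDerivWithin_univ]
    rw [iteratedFDerivWithin_of_isOpen n ht hxt, iteratedFDerivWithin_univ]
  have h3 : iteratedDeriv n g x₀ = iteratedDerivWithin n g t x₀ := by
    simp only [iteratedDeriv, iteratedDerivWithin, ← iteratedFDerivWithin_univ]
    rw [iteratedFDerivWithin_of_isOpen n ht hxt, iteratedFDerivWithin_univ]
  rw [h1, h2, h3]
  exact iteratedDerivWithin_add hxt ht.uniqueDiffOn
    (hcdf.mono (htu.trans inter_subset_left) x₀ hxt) (hcdg.mono (htu.trans inter_subset_right) x₀ hxt)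

end VanHelpers

section Van
variable {F G H : Type*} [NormedAddCommGroup F] [NormedSpace ℝ F]
  [NormedAddCommGroup G] [NormedSpace ℝ G] [NormedAddCommGroup H] [NormedSpace ℝ H]
  {x₀ : ℝ}

lemma vanA (j : ℕ) (B : F →L[ℝ] G →L[ℝ] H) (u : ℝ → F) (w : ℝ → G)
    (hu : ContDiffAt ℝ j u x₀) (hw : ContDiffAt ℝ j w x₀)
    (h0 : ∀ i ≤ j, iteratedDeriv i w x₀ = 0) :
    iteratedDeriv j (fun s => B (u s) (w s)) x₀ = 0 := by
  induction j generalizing u w with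
  | zero =>
    have := h0 0 le_rfl
    simp only [iteratedDeriv_zero] at this ⊢
    rw [this, map_zero]
  | succ m ih =>
    have huE : ∀ᶠ s in 𝓝 x₀, ContDiffAt ℝ (m + 1) u s := hu.eventually (by simp)
    have hwE : ∀ᶠ s in 𝓝 x₀, ContDiffAt ℝ (m + 1) w s := hw.eventually (by simp)
    have hder : deriv (fun s => B (u s) (w s)) =ᶠ[𝓝 x₀]
        fun s => B (deriv u s) (w s) + B (u s) (deriv w s) := by
      filter_upwards [huE, hwE] with s hus hws
      have h1 : HasDerivAt u (deriv u s) s :=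
        (hus.differentiableAt (by simp)).hasDerivAt
      have h2 : HasDerivAt w (deriv w s) s :=
        (hws.differentiableAt (by simp)).hasDerivAt
      have hc : HasDerivAt (fun s => B (u s)) (B (deriv u s)) s :=
        B.hasFDerivAt.comp_hasDerivAt s h1
      exact (hc.clm_apply h2).deriv
    have hu' : ContDiffAt ℝ m (deriv u) x₀ := contDiffAt_deriv hu
    have hw' : ContDiffAt ℝ m (deriv w) x₀ := contDiffAt_deriv hw
    have hum : ContDiffAt ℝ m u x₀ := hu.of_le (by exact_mod_cast Nat.le_succ m)
    have hwm : ContDiffAt ℝ m w x₀ := hw.of_le (by exact_mod_cast Nat.le_succ m)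
    have hA : ContDiffAt ℝ m (fun s => B (deriv u s) (w s)) x₀ :=
      (B.contDiff.comp_contDiffAt x₀ hu').clm_apply hwm
    have hB : ContDiffAt ℝ m (fun s => B (u s) (deriv w s)) x₀ :=
      (B.contDiff.comp_contDiffAt x₀ hum).clm_apply hw'
    rw [iteratedDeriv_succ', iteratedDeriv_congr_nhds hder, iteratedDeriv_add_at hA hB,
      ih (deriv u) w hu' hwm (fun i hi => h0 i (hi.trans (Nat.le_succ m))),
      ih u (deriv w) hum hw' (fun i hi => by
        rw [show iteratedDeriv i (deriv w) x₀ = iteratedDeriv (i+1) w x₀ from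
          (congrFun (iteratedDeriv_succ' (n := i) (f := w)) x₀).symm]
        exact h0 (i+1) (by omega)), add_zero]

lemma vanB {k : ℕ} (B : F →L[ℝ] G →L[ℝ] H) {u : ℝ → F} {w : ℝ → G}
    (hu : ContDiffAt ℝ k u x₀) (hw : ContDiffAt ℝ k w x₀)
    (hu0 : ∀ j, 1 ≤ j → j ≤ k → iteratedDeriv j u x₀ = 0)
    (hw0 : ∀ j, 1 ≤ j → j ≤ k → iteratedDeriv j w x₀ = 0) :
    ∀ j, 1 ≤ j → j ≤ k → iteratedDeriv j (fun s => B (u s) (w s)) x₀ = 0 := by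
  intro j hj1 hjk
  obtain ⟨m, rfl⟩ : ∃ m, j = m + 1 := ⟨j - 1, by omega⟩
  have hkm : (m + 1 : ℕ) ≤ k := hjk
  have hu1 : ContDiffAt ℝ (m+1) u x₀ := hu.of_le (by exact_mod_cast hkm)
  have hw1 : ContDiffAt ℝ (m+1) w x₀ := hw.of_le (by exact_mod_cast hkm)
  have huE : ∀ᶠ s in 𝓝 x₀, ContDiffAt ℝ (m + 1) u s := hu1.eventually (by simp)
  have hwE : ∀ᶠ s in 𝓝 x₀, ContDiffAt ℝ (m + 1) w s := hw1.eventually (by simp)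
  have hder : deriv (fun s => B (u s) (w s)) =ᶠ[𝓝 x₀]
      fun s => B (deriv u s) (w s) + B (u s) (deriv w s) := by
    filter_upwards [huE, hwE] with s hus hws
    have h1 : HasDerivAt u (deriv u s) s :=
      (hus.differentiableAt (by simp)).hasDerivAt
    have h2 : HasDerivAt w (deriv w s) s :=
      (hws.differentiableAt (by simp)).hasDerivAt
    exact ((B.hasFDerivAt.comp_hasDerivAt s h1).clm_apply h2).deriv
  have hu' : ContDiffAt ℝ m (deriv u) x₀ := contDiffAt_deriv hu1
  have hw' : ContDiffAt ℝ m (deriv w) x₀ := contDiffAt_deriv hw1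
  have hum : ContDiffAt ℝ m u x₀ := hu1.of_le (by exact_mod_cast Nat.le_succ m)
  have hwm : ContDiffAt ℝ m w x₀ := hw1.of_le (by exact_mod_cast Nat.le_succ m)
  have hA : ContDiffAt ℝ m (fun s => B (deriv u s) (w s)) x₀ :=
    (B.contDiff.comp_contDiffAt x₀ hu').clm_apply hwm
  have hB : ContDiffAt ℝ m (fun s => B (u s) (deriv w s)) x₀ :=
    (B.contDiff.comp_contDiffAt x₀ hum).clm_apply hw'
  have hu'0 : ∀ i ≤ m, iteratedDeriv i (deriv u) x₀ = 0 := fun i hi => by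
    rw [show iteratedDeriv i (deriv u) x₀ = iteratedDeriv (i+1) u x₀ from
      (congrFun (iteratedDeriv_succ' (n := i) (f := u)) x₀).symm]
    exact hu0 (i+1) (by omega) (by omega)
  have hw'0 : ∀ i ≤ m, iteratedDeriv i (deriv w) x₀ = 0 := fun i hi => by
    rw [show iteratedDeriv i (deriv w) x₀ = iteratedDeriv (i+1) w x₀ from
      (congrFun (iteratedDeriv_succ' (n := i) (f := w)) x₀).symm]
    exact hw0 (i+1) (by omega) (by omega)
  have e1 : iteratedDeriv m (fun s => B (deriv u s) (w s)) x₀ = 0 := by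
    have := vanA m B.flip w (deriv u) hwm hu' hu'0
    simpa using this
  have e2 : iteratedDeriv m (fun s => B (u s) (deriv w s)) x₀ = 0 :=
    vanA m B u (deriv w) hum hw' hw'0
  rw [iteratedDeriv_succ', iteratedDeriv_congr_nhds hder, iteratedDeriv_add_at hA hB, e1, e2,
    add_zero]

lemma vanComp {k : ℕ} {g : F → G} {f : ℝ → F} (hg : ContDiffAt ℝ k g (f x₀))
    (hf : ContDiffAt ℝ k f x₀) (h0 : ∀ j, 1 ≤ j → j ≤ k → iteratedDeriv j f x₀ = 0) :
    ∀ j, 1 ≤ j → j ≤ k → iteratedDeriv j (fun s => g (f s)) x₀ = 0 := by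
  intro j hj1 hjk
  obtain ⟨m, rfl⟩ : ∃ m, j = m + 1 := ⟨j - 1, by omega⟩
  have hkm : (m + 1 : ℕ) ≤ k := hjk
  have hf1 : ContDiffAt ℝ (m+1) f x₀ := hf.of_le (by exact_mod_cast hkm)
  have hgE : ∀ᶠ y in 𝓝 (f x₀), ContDiffAt ℝ k g y := hg.eventually (by simp)
  have hfE : ∀ᶠ s in 𝓝 x₀, ContDiffAt ℝ (m + 1) f s := hf1.eventually (by simp)
  have hfc : ContinuousAt f x₀ := hf.continuousAt
  have hder : deriv (fun s => g (f s)) =ᶠ[𝓝 x₀]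
      fun s => (ContinuousLinearMap.apply ℝ G).flip (fderiv ℝ g (f s)) (deriv f s) := by
    filter_upwards [hfE, hfc.eventually hgE] with s hfs hgs
    have h1 : HasDerivAt f (deriv f s) s :=
      (hfs.differentiableAt (by simp)).hasDerivAt
    have h2 : DifferentiableAt ℝ g (f s) :=
      hgs.differentiableAt (by exact_mod_cast (by omega : k ≠ 0))
    exact (h2.hasFDerivAt.comp_hasDerivAt s h1).deriv
  have hfm : ContDiffAt ℝ m f x₀ := hf.of_le (by exact_mod_cast (by omega : m ≤ k))
  have ha : ContDiffAt ℝ m (fun s => fderiv ℝ g (f s)) x₀ :=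
    (hg.fderiv_right (by exact_mod_cast hkm)).comp x₀ hfm
  have hw' : ContDiffAt ℝ m (deriv f) x₀ := contDiffAt_deriv hf1
  have hw'0 : ∀ i ≤ m, iteratedDeriv i (deriv f) x₀ = 0 := fun i hi => by
    rw [show iteratedDeriv i (deriv f) x₀ = iteratedDeriv (i+1) f x₀ from
      (congrFun (iteratedDeriv_succ' (n := i) (f := f)) x₀).symm]
    exact h0 (i+1) (by omega) (by omega)
  rw [iteratedDeriv_succ', iteratedDeriv_congr_nhds hder]
  exact vanA m ((ContinuousLinearMap.apply ℝ G).flip) (fun s => fderiv ℝ g (f s)) (deriv f)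
    ha hw' hw'0

end Van

section VanInt
variable {F : Type*} [NormedAddCommGroup F] [NormedSpace ℝ F] [CompleteSpace F]

lemma vanInt (x₀ : ℝ) : ∀ (k : ℕ) (v : ℝ → ℝ → F) (I : Set ℝ), IsOpen I → x₀ ∈ I →
    ContDiffOn ℝ k (fun p : ℝ × ℝ => v p.1 p.2) (univ ×ˢ I) →
    (∀ θ, ∀ j, 1 ≤ j → j ≤ k → iteratedDeriv j (fun s => v θ s) x₀ = 0) →
    ContDiffOn ℝ k (fun s => ∫ θ in (0:ℝ)..(2*Real.pi), v θ s) I ∧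
      ∀ j, 1 ≤ j → j ≤ k → iteratedDeriv j (fun s => ∫ θ in (0:ℝ)..(2*Real.pi), v θ s) x₀ = 0 := by
  intro k
  induction k with
  | zero =>
    intro v I hI hx hv _
    refine ⟨?_, by omega⟩
    have hset : IsOpen (univ ×ˢ I : Set (ℝ × ℝ)) := isOpen_univ.prod hI
    rw [Nat.cast_zero, contDiffOn_zero]
    intro s₁ hs₁
    -- continuity at s₁ via dominated convergence
    obtain ⟨ε, hε, hball⟩ := Metric.isOpen_iff.1 hI s₁ hs₁
    have hcb : closedBall s₁ (ε/2) ⊆ I := fun x hx =>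
      hball (lt_of_le_of_lt hx (by linarith) : dist x s₁ < ε)
    have hK : IsCompact ((Icc (0:ℝ) (2*Real.pi)) ×ˢ closedBall s₁ (ε/2)) :=
      isCompact_Icc.prod (isCompact_closedBall _ _)
    have hKsub : (Icc (0:ℝ) (2*Real.pi)) ×ˢ closedBall s₁ (ε/2) ⊆ univ ×ˢ I :=
      prod_mono (subset_univ _) hcb
    obtain ⟨C, hC⟩ := hK.exists_bound_of_continuousOn ((hv.continuousOn).mono hKsub)
    have hslice : ∀ x ∈ I, Continuous fun θ => v θ x := by
      intro x hxI
      rw [← continuousOn_univ]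
      exact (hv.continuousOn.comp (continuous_id.prodMk continuous_const).continuousOn
        (fun θ _ => ⟨trivial, hxI⟩))
    have : ContinuousAt (fun s => ∫ θ in (0:ℝ)..(2*Real.pi), v θ s) s₁ := by
      apply intervalIntegral.continuousAt_of_dominated_interval
        (bound := fun _ => C)
      · filter_upwards [hI.eventually_mem hs₁] with x hxI
        exact (hslice x hxI).aestronglyMeasurable
      · filter_upwards [Metric.closedBall_mem_nhds s₁ (by linarith : (0:ℝ) < ε/2)] with x hxB
        refine ae_of_all _ fun θ hθ => ?_
        exact hC (θ, x) ⟨Ioc_subset_Icc_self (by rwa [uIoc_of_le (by positivity)] at hθ), hxB⟩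
      · exact intervalIntegrable_const
      · refine ae_of_all _ fun θ hθ => ?_
        have : ContinuousAt (fun p : ℝ × ℝ => v p.1 p.2) (θ, s₁) :=
          hv.continuousOn.continuousAt (hset.mem_nhds ⟨trivial, hs₁⟩)
        exact this.comp ((continuous_const.prodMk continuous_id).continuousAt)
    exact this.continuousWithinAt
  | succ k ih =>
    intro v I hI hx hv h0
    have hset : IsOpen (univ ×ˢ I : Set (ℝ × ℝ)) := isOpen_univ.prod hI
    set V : ℝ × ℝ → F := fun p => v p.1 p.2 with hV
    set w : ℝ → ℝ → F := fun θ s => fderiv ℝ V (θ, s) (0, 1) with hwdef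
    -- joint smoothness of w
    have hfd : ContDiffOn ℝ k (fun p => fderiv ℝ V p) (univ ×ˢ I) := by
      have := hv.fderivWithin hset.uniqueDiffOn (m := k) (by exact_mod_cast le_refl (k+1))
      exact this.congr fun p hp => (fderivWithin_of_isOpen hset hp).symm
    have hw_joint : ContDiffOn ℝ k (fun p : ℝ × ℝ => w p.1 p.2) (univ ×ˢ I) :=
      hfd.clm_apply contDiffOn_const
    -- pointwise derivative
    have hder_all : ∀ θ, ∀ s ∈ I, HasDerivAt (fun s => v θ s) (w θ s) s := by
      intro θ s hs
      have hdiff : DifferentiableAt ℝ V (θ, s) :=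
        (hv.differentiableOn (by simp)).differentiableAt
          (hset.mem_nhds ⟨trivial, hs⟩)
      have hline : HasDerivAt (fun s : ℝ => ((θ, s) : ℝ × ℝ)) (0, 1) s :=
        (hasDerivAt_const s θ).prodMk (hasDerivAt_id s)
      exact hdiff.hasFDerivAt.comp_hasDerivAt s hline
    set G : ℝ → F := fun s => ∫ θ in (0:ℝ)..(2*Real.pi), w θ s with hG
    -- slice measurability/continuity helpers
    have hslice_cont : ∀ (u : ℝ → ℝ → F), ContDiffOn ℝ 0 (fun p : ℝ × ℝ => u p.1 p.2) (univ ×ˢ I) →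
        ∀ x ∈ I, Continuous fun θ => u θ x := by
      intro u hu x hxI
      rw [← continuousOn_univ]
      exact ((contDiffOn_zero.1 hu).comp (continuous_id.prodMk continuous_const).continuousOn
        (fun θ _ => ⟨trivial, hxI⟩))
    -- HasDerivAt of the integral everywhere on I
    have key : ∀ s₁ ∈ I, HasDerivAt (fun s => ∫ θ in (0:ℝ)..(2*Real.pi), v θ s) (G s₁) s₁ := by
      intro s₁ hs₁
      obtain ⟨ε, hε, hball⟩ := Metric.isOpen_iff.1 hI s₁ hs₁
      have hcb : closedBall s₁ (ε/2) ⊆ I := fun x hx =>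
        hball (lt_of_le_of_lt hx (by linarith) : dist x s₁ < ε)
      have hK : IsCompact ((Icc (0:ℝ) (2*Real.pi)) ×ˢ closedBall s₁ (ε/2)) :=
        isCompact_Icc.prod (isCompact_closedBall _ _)
      have hKsub : (Icc (0:ℝ) (2*Real.pi)) ×ˢ closedBall s₁ (ε/2) ⊆ univ ×ˢ I :=
        prod_mono (subset_univ _) hcb
      obtain ⟨C, hC⟩ := hK.exists_bound_of_continuousOn ((hw_joint.continuousOn).mono hKsub)
      have h := intervalIntegral.hasDerivAt_integral_of_dominated_loc_of_deriv_le
        (F := fun x θ => v θ x) (F' := fun x θ => w θ x) (bound := fun _ => C)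
        (a := (0:ℝ)) (b := 2*Real.pi) (x₀ := s₁) (s := ball s₁ (ε/2)) (μ := volume) (ball_mem_nhds s₁ (by linarith))
        ?_ ?_ ?_ ?_ ?_ ?_
      · exact h.2
      · filter_upwards [hI.eventually_mem hs₁] with x hxI
        exact (hslice_cont v (hv.of_le (by exact_mod_cast Nat.zero_le _)) x hxI).aestronglyMeasurable
      · exact ((hslice_cont v (hv.of_le (by exact_mod_cast Nat.zero_le _)) s₁ hs₁)).intervalIntegrable _ _
      · exact (hslice_cont w (hw_joint.of_le (by exact_mod_cast Nat.zero_le _)) s₁ hs₁).aestronglyMeasurable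
      · refine ae_of_all _ fun θ hθ => fun x hxB => ?_
        exact hC (θ, x) ⟨Ioc_subset_Icc_self (by rwa [uIoc_of_le (by positivity)] at hθ),
          ball_subset_closedBall hxB⟩
      · exact intervalIntegrable_const
      · refine ae_of_all _ fun θ hθ => fun x hxB => ?_
        exact hder_all θ x (hcb (ball_subset_closedBall hxB))
    -- vanishing of slice derivatives of w
    have hw0 : ∀ θ, ∀ j, 1 ≤ j → j ≤ k → iteratedDeriv j (fun s => w θ s) x₀ = 0 := by
      intro θ j hj1 hjk
      have hev : (fun s => w θ s) =ᶠ[𝓝 x₀] deriv (fun s => v θ s) := by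
        filter_upwards [hI.mem_nhds hx] with s hs
        exact ((hder_all θ s hs).deriv).symm
      rw [iteratedDeriv_congr_nhds hev,
        show iteratedDeriv j (deriv (fun s => v θ s)) x₀ = iteratedDeriv (j+1) (fun s => v θ s) x₀
          from (congrFun (iteratedDeriv_succ') x₀).symm]
      exact h0 θ (j+1) (by omega) (by omega)
    obtain ⟨ihG, ihVan⟩ := ih w I hI hx hw_joint hw0
    constructor
    · rw [show ((k+1:ℕ) : WithTop ℕ∞) = (k : WithTop ℕ∞) + 1 by exact_mod_cast rfl,
        contDiffOn_succ_iff_deriv_of_isOpen hI]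
      refine ⟨fun s hs => ((key s hs).differentiableAt).differentiableWithinAt, by simp, ?_⟩
      exact ihG.congr (fun s hs => (key s hs).deriv)
    · intro j hj1 hjk
      obtain ⟨m, rfl⟩ : ∃ m, j = m + 1 := ⟨j - 1, by omega⟩
      have hev : deriv (fun s => ∫ θ in (0:ℝ)..(2*Real.pi), v θ s) =ᶠ[𝓝 x₀] G := by
        filter_upwards [hI.mem_nhds hx] with s hs
        exact (key s hs).deriv
      rw [iteratedDeriv_succ', iteratedDeriv_congr_nhds hev]
      rcases Nat.eq_zero_or_pos m with rfl | hm
      · rw [iteratedDeriv_zero]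
        have hwz : ∀ θ, w θ x₀ = 0 := by
          intro θ
          have h1 := h0 θ 1 le_rfl (by omega)
          rw [iteratedDeriv_one] at h1
          rw [← (hder_all θ x₀ hx).deriv]
          exact h1
        have : G x₀ = ∫ θ in (0:ℝ)..(2*Real.pi), (0:F) :=
          intervalIntegral.integral_congr (fun θ _ => hwz θ)
        rw [this]
        simp
      · exact ihVan m hm (by omega)

end VanInt


-- Step I test, generalized: E any complex Banach algebra-ish (CLMs)
section StepI
variable {M : Type*} [NormedAddCommGroup M] [NormedSpace ℂ M] [CompleteSpace M]

lemma stepI {R : ℝ} (hR : 0 < R) (A Q SS : M →L[ℂ] M)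
    (hres : ∀ z : ℂ, ‖z‖ = R → IsUnit (z • (1 : M →L[ℂ] M) - A))
    (hgap : spectrum ℂ A ∩ Metric.ball (0 : ℂ) R = {0})
    (htends : Filter.Tendsto (fun z : ℂ => Q ∘L Ring.inverse (A - z • (1 : M →L[ℂ] M)) ∘L Q)
      (nhdsWithin (0 : ℂ) {(0 : ℂ)}ᶜ) (nhds SS)) :
    SS = (2 * Real.pi * Complex.I : ℂ)⁻¹ •
      ∮ z in C(0, R), z⁻¹ • (Q ∘L Ring.inverse (A - z • (1 : M →L[ℂ] M)) ∘L Q) := by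
  set f : ℂ → (M →L[ℂ] M) := fun z => Q ∘L Ring.inverse (A - z • (1 : M →L[ℂ] M)) ∘L Q with hf
  have hunit : ∀ z ∈ closedBall (0:ℂ) R \ {0}, IsUnit (A - z • (1 : M →L[ℂ] M)) := by
    intro z hz
    obtain ⟨hz1, hz2⟩ := hz
    have hz2' : z ≠ 0 := hz2
    rw [mem_closedBall, dist_zero_right] at hz1
    have : IsUnit (z • (1 : M →L[ℂ] M) - A) := by
      rcases lt_or_eq_of_le hz1 with h | h
      · have hnotspec : z ∉ spectrum ℂ A := by
          intro hmem
          have : z ∈ spectrum ℂ A ∩ Metric.ball (0:ℂ) R := ⟨hmem, by simpa [mem_ball, dist_zero_right] using h⟩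
          rw [hgap] at this
          exact hz2' this
        have := spectrum.notMem_iff.1 hnotspec
        rwa [Algebra.algebraMap_eq_smul_one] at this
      · exact hres z h
    simpa [neg_sub] using this.neg
  have hdiffAt : ∀ z ∈ closedBall (0:ℂ) R \ {0}, DifferentiableAt ℂ f z := by
    intro z hz
    have hu := hunit z hz
    have h1 : DifferentiableAt ℂ (fun z : ℂ => Ring.inverse (A - z • (1 : M →L[ℂ] M))) z := by
      have hi : DifferentiableAt ℂ (Ring.inverse : (M →L[ℂ] M) → (M →L[ℂ] M))
          (A - z • (1 : M →L[ℂ] M)) := by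
        have := (contDiffAt_ringInverse ℂ (n := 1) hu.unit)
        rw [hu.unit_spec] at this
        exact this.differentiableAt (by simp)
      exact DifferentiableAt.comp (g := (Ring.inverse : (M →L[ℂ] M) → (M →L[ℂ] M))) z hi ((differentiableAt_const A).sub (differentiableAt_id.smul_const _))
    exact ((differentiableAt_const Q).clm_comp h1).clm_comp (differentiableAt_const Q)
  have hlim : limUnder (𝓝[≠] (0:ℂ)) f = SS := htends.limUnder_eq
  set g := Function.update f 0 SS with hg
  have hgdiff : DifferentiableOn ℂ g (ball 0 R) := by
    have hb : (fun z => f z - f 0) =o[𝓝[≠] (0:ℂ)] fun z => (z - 0)⁻¹ := by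
      have hb2 : Filter.IsBoundedUnder (· ≤ ·) (𝓝[≠] (0:ℂ)) (norm ∘ fun z => f z - f 0) :=
        (htends.sub_const (f 0)).norm.isBoundedUnder_le
      exact Filter.IsBoundedUnder.isLittleO_sub_self_inv hb2
    have := Complex.differentiableOn_update_limUnder_of_isLittleO
      (ball_mem_nhds (0:ℂ) hR)
      (fun z hz => (hdiffAt z ⟨ball_subset_closedBall hz.1, hz.2⟩).differentiableWithinAt) hb
    rwa [hlim] at this
  have hgdiffAt : ∀ x ∈ ball (0:ℂ) R, DifferentiableAt ℂ g x := fun x hx =>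
    hgdiff.differentiableAt (isOpen_ball.mem_nhds hx)
  have hgcont : ContinuousOn g (closedBall 0 R) := by
    intro z hz
    by_cases h : z ∈ ball (0:ℂ) R
    · exact (hgdiffAt z h).continuousAt.continuousWithinAt
    · have hz0 : z ≠ 0 := by
        intro h0; exact h (h0 ▸ mem_ball_self hR)
      have hev : f =ᶠ[𝓝 z] g := by
        filter_upwards [isOpen_compl_singleton.mem_nhds (by simpa using hz0 : z ∈ ({(0:ℂ)}ᶜ : Set ℂ))] with w hw
        exact (Function.update_of_ne hw _ _).symm
      exact (((hdiffAt z ⟨hz, hz0⟩).continuousAt).congr hev).continuousWithinAt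
  have hcauchy := circleIntegral_sub_inv_smul_of_differentiable_on_off_countable
    (s := {(0:ℂ)}) (countable_singleton 0) (mem_ball_self hR) hgcont
    (fun x hx => hgdiffAt x hx.1)
  have hgeq : EqOn (fun z : ℂ => (z - 0)⁻¹ • g z) (fun z : ℂ => z⁻¹ • f z) (sphere (0:ℂ) R) := by
    intro z hz
    have hz0 : z ≠ 0 := by
      intro h0
      rw [mem_sphere_zero_iff_norm, h0] at hz
      simp at hz; exact absurd hz.symm (ne_of_gt hR)
    simp only [sub_zero, hg, Function.update_of_ne hz0]
  rw [circleIntegral.integral_congr hR.le hgeq] at hcauchy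
  have hg0 : g 0 = SS := Function.update_self _ _ _
  rw [hg0] at hcauchy
  rw [hcauchy]
  rw [inv_smul_smul₀ (by simp [Real.pi_ne_zero, Complex.I_ne_zero, Complex.ext_iff] : (2 * (Real.pi:ℂ) * Complex.I) ≠ 0)]

lemma pullQ {R : ℝ} (hR : 0 < R) (A Q : M →L[ℂ] M)
    (hres : ∀ z : ℂ, ‖z‖ = R → IsUnit (z • (1 : M →L[ℂ] M) - A)) :
    (∮ z in C(0, R), z⁻¹ • (Q ∘L Ring.inverse (A - z • (1:M →L[ℂ] M)) ∘L Q)) =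
      Q ∘L (∮ z in C(0, R), z⁻¹ • Ring.inverse (A - z • (1:M →L[ℂ] M))) ∘L Q := by
  set Λ : (M →L[ℂ] M) →L[ℂ] (M →L[ℂ] M) :=
    (ContinuousLinearMap.compL ℂ M M M Q).comp
      (((ContinuousLinearMap.compL ℂ M M M).flip) Q) with hΛdef
  have hΛ : ∀ X : M →L[ℂ] M, Λ X = Q ∘L X ∘L Q := fun X => rfl
  have hW : Continuous fun θ : ℝ =>
      Ring.inverse (A - circleMap 0 R θ • (1:M →L[ℂ] M)) := by
    rw [continuous_iff_continuousAt]
    intro θ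
    have hu : IsUnit (A - circleMap 0 R θ • (1:M →L[ℂ] M)) := by
      have : IsUnit (circleMap 0 R θ • (1:M →L[ℂ] M) - A) :=
        hres _ (by rw [norm_circleMap_zero, abs_of_pos hR])
      simpa [neg_sub] using this.neg
    have hinv : ContinuousAt (Ring.inverse : (M →L[ℂ] M) → _)
        (A - circleMap 0 R θ • (1:M →L[ℂ] M)) := by
      have := (contDiffAt_ringInverse ℂ (n := 1) hu.unit)
      rw [hu.unit_spec] at this
      exact this.continuousAt
    have hinner : Continuous fun θ : ℝ => A - circleMap 0 R θ • (1:M →L[ℂ] M) :=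
      continuous_const.sub ((continuous_circleMap 0 R).smul continuous_const)
    exact ContinuousAt.comp (g := (Ring.inverse : (M →L[ℂ] M) → _)) hinv hinner.continuousAt
  have hinv0 : Continuous fun θ : ℝ => (circleMap 0 R θ)⁻¹ :=
    (continuous_circleMap 0 R).inv₀ fun θ => circleMap_ne_center hR.ne'
  have hderc : Continuous fun θ : ℝ => deriv (circleMap 0 R) θ := by
    simp only [deriv_circleMap]
    exact (continuous_circleMap 0 R).mul continuous_const
  have hcontF : Continuous fun θ : ℝ => deriv (circleMap 0 R) θ •
      ((circleMap 0 R θ)⁻¹ • Ring.inverse (A - circleMap 0 R θ • (1:M →L[ℂ] M))) :=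
    hderc.smul (hinv0.smul hW)
  have hint : IntervalIntegrable (fun θ : ℝ => deriv (circleMap 0 R) θ •
      ((circleMap 0 R θ)⁻¹ • Ring.inverse (A - circleMap 0 R θ • (1:M →L[ℂ] M))))
      volume 0 (2 * Real.pi) := hcontF.intervalIntegrable _ _
  calc (∮ z in C(0, R), z⁻¹ • (Q ∘L Ring.inverse (A - z • (1:M →L[ℂ] M)) ∘L Q))
      = ∫ θ in (0:ℝ)..(2 * Real.pi), Λ (deriv (circleMap 0 R) θ •
        ((circleMap 0 R θ)⁻¹ • Ring.inverse (A - circleMap 0 R θ • (1:M →L[ℂ] M)))) := by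
        simp only [circleIntegral]
        refine intervalIntegral.integral_congr fun θ _ => ?_
        rw [_root_.map_smul, _root_.map_smul, hΛ]
    _ = Λ (∫ θ in (0:ℝ)..(2 * Real.pi), deriv (circleMap 0 R) θ •
        ((circleMap 0 R θ)⁻¹ • Ring.inverse (A - circleMap 0 R θ • (1:M →L[ℂ] M)))) :=
        Λ.intervalIntegral_comp_comm hint
    _ = Q ∘L (∮ z in C(0, R), z⁻¹ • Ring.inverse (A - z • (1:M →L[ℂ] M))) ∘L Q := by
        rw [hΛ]
        rfl

end StepI

abbrev EM (n : ℕ) := Matrix (Fin n) (Fin n) ℂ →L[ℂ] Matrix (Fin n) (Fin n) ℂ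

instance {M : Type*} [NormedAddCommGroup M] [NormedSpace ℂ M] :
    IsScalarTower ℝ (M →L[ℂ] M) (M →L[ℂ] M) :=
  ⟨fun r f g => ContinuousLinearMap.ext fun x => rfl⟩

instance {M : Type*} [NormedAddCommGroup M] [NormedSpace ℂ M] :
    SMulCommClass ℝ (M →L[ℂ] M) (M →L[ℂ] M) :=
  ⟨fun r f g => ContinuousLinearMap.ext fun x => by
    show r • f (g x) = f (r • g x)
    rw [ContinuousLinearMap.map_smul_of_tower]⟩

noncomputable instance emNormedRing {n : ℕ} : NormedRing (EM n) := ContinuousLinearMap.toNormedRing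

noncomputable instance emNormedAlgebra {n : ℕ} : NormedAlgebra ℂ (EM n) :=
  ContinuousLinearMap.toNormedAlgebra

noncomputable instance emNormedAlgebraReal {n : ℕ} : NormedAlgebra ℝ (EM n) :=
  NormedAlgebra.complexToReal

instance emCompleteSpace {n : ℕ} : @CompleteSpace (EM n) (@PseudoMetricSpace.toUniformSpace _
    (@SeminormedAddCommGroup.toPseudoMetricSpace _
      (@NormedAddCommGroup.toSeminormedAddCommGroup _ matrixCLMNormedAddCommGroup))) := by
  have : SequentialSpace (Matrix (Fin n) (Fin n) ℂ) :=
    inferInstanceAs (SequentialSpace (Fin n → Fin n → ℂ))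
  exact ContinuousLinearMap.instCompleteSpace

instance emGeom {n : ℕ} : HasSummableGeomSeries (EM n) := by
  have h : CompleteSpace (EM n) := emCompleteSpace
  exact @instHasSummableGeomSeriesOfCompleteSpace (EM n) _ h

instance emTowerA {n : ℕ} : IsScalarTower ℝ ℂ (EM n) :=
  ⟨fun r c x => by ext y : 1; simp only [ContinuousLinearMap.smul_apply, smul_assoc]⟩

noncomputable instance emDistribSMul {n : ℕ} : @DistribSMul ℂ (EM n)
    (@AddMonoid.toAddZeroClass _ (@SubNegMonoid.toAddMonoid _ (@AddGroup.toSubNegMonoid _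
      (@AddCommGroup.toAddGroup _ (@NormedAddCommGroup.toAddCommGroup _
        matrixCLMNormedAddCommGroup))))) :=
  (inferInstance : DistribSMul ℂ (EM n))

instance emCCS {n : ℕ} : @ContinuousConstSMul ℂ (EM n) (@UniformSpace.toTopologicalSpace _
    (@PseudoMetricSpace.toUniformSpace _ (@SeminormedAddCommGroup.toPseudoMetricSpace _
      (@NormedAddCommGroup.toSeminormedAddCommGroup _ matrixCLMNormedAddCommGroup)))) _ :=
  ⟨fun c => by exact (continuous_const_smul c : Continuous fun x : EM n => c • x)⟩

instance emTower2 {n : ℕ} : IsScalarTower ℝ (EM n) (EM n) :=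
  ⟨fun r f g => ContinuousLinearMap.ext fun x => rfl⟩

instance emComm {n : ℕ} : SMulCommClass ℝ (EM n) (EM n) :=
  ⟨fun r f g => ContinuousLinearMap.ext fun x => by
    show r • f (g x) = f (r • g x)
    rw [ContinuousLinearMap.map_smul_of_tower]⟩

set_option maxHeartbeats 2000000 in
/-- Under the same hypotheses as for the Riesz projection (C^k family with
isolated eigenvalue `0` and vanishing derivatives of `L` at `s₀` up to order `k`), the
reduced resolvent `S(s) = lim_{z→0} Q(s)(L(s) − z)⁻¹ Q(s)` with `Q(s) = 1 − P(s)` also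
satisfies `S^(j)(s₀) = 0` for `j = 1,…,k`. -/
theorem reduced_resolvent_derivs_vanish {n : ℕ} (k : ℕ)
    (L P S : ℝ → (Matrix (Fin n) (Fin n) ℂ →L[ℂ] Matrix (Fin n) (Fin n) ℂ))
    (s₀ R : ℝ) (hR : 0 < R)
    (hL : ContDiff ℝ k L)
    (hres : ∀ᶠ s in nhds s₀, ∀ z : ℂ, ‖z‖ = R →
      IsUnit (z • (1 : Matrix (Fin n) (Fin n) ℂ →L[ℂ] Matrix (Fin n) (Fin n) ℂ) - L s))
    (hgap : ∀ᶠ s in nhds s₀, spectrum ℂ (L s) ∩ Metric.ball (0 : ℂ) R = {0})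
    (hsemisimple : ∀ᶠ s in nhds s₀,
      LinearMap.ker (((L s) ^ 2 : Matrix (Fin n) (Fin n) ℂ →L[ℂ] Matrix (Fin n) (Fin n) ℂ) : Matrix (Fin n) (Fin n) ℂ →ₗ[ℂ] Matrix (Fin n) (Fin n) ℂ) =
        LinearMap.ker (L s : Matrix (Fin n) (Fin n) ℂ →ₗ[ℂ] Matrix (Fin n) (Fin n) ℂ))
    (hP : ∀ᶠ s in nhds s₀, P s = (2 * Real.pi * Complex.I)⁻¹ •
      (∮ z in C(0, R), Ring.inverse
        (z • (1 : Matrix (Fin n) (Fin n) ℂ →L[ℂ] Matrix (Fin n) (Fin n) ℂ) - L s)))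
    (hS : ∀ᶠ s in nhds s₀, Filter.Tendsto
      (fun z : ℂ => (1 - P s) ∘L Ring.inverse
          (L s - z • (1 : Matrix (Fin n) (Fin n) ℂ →L[ℂ] Matrix (Fin n) (Fin n) ℂ))
          ∘L (1 - P s))
      (nhdsWithin (0 : ℂ) {(0 : ℂ)}ᶜ) (nhds (S s)))
    (hder : ∀ j, 1 ≤ j → j ≤ k → iteratedDeriv j L s₀ = 0) :
    ∀ j, 1 ≤ j → j ≤ k → iteratedDeriv j S s₀ = 0 := by
  set c0 : ℂ := (2 * Real.pi * Complex.I : ℂ)⁻¹ with hc0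
  -- open neighbourhood where all the eventual hypotheses hold
  obtain ⟨I, hIsub, hIopen, hIs₀⟩ :=
    _root_.mem_nhds_iff.1 (hres.and (hgap.and (hP.and hS)) : _)
  have hresI : ∀ s ∈ I, ∀ z : ℂ, ‖z‖ = R → IsUnit (z • (1:EM n) - L s) :=
    fun s hs => (hIsub hs).1
  have hgapI : ∀ s ∈ I, spectrum ℂ (L s) ∩ Metric.ball (0 : ℂ) R = {0} :=
    fun s hs => (hIsub hs).2.1
  have hPI : ∀ s ∈ I, P s = c0 • (∮ z in C(0, R), Ring.inverse (z • (1:EM n) - L s)) :=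
    fun s hs => (hIsub hs).2.2.1
  have hSI : ∀ s ∈ I, Filter.Tendsto
      (fun z : ℂ => (1 - P s) ∘L Ring.inverse (L s - z • (1:EM n)) ∘L (1 - P s))
      (nhdsWithin (0 : ℂ) {(0 : ℂ)}ᶜ) (nhds (S s)) :=
    fun s hs => (hIsub hs).2.2.2
  -- smoothness of circle data
  have hcm : ContDiff ℝ k (circleMap 0 R) := by
    unfold circleMap
    exact contDiff_const.add (contDiff_const.mul ((Complex.contDiff_exp (𝕜 := ℝ)).comp
      (Complex.ofRealCLM.contDiff.mul contDiff_const)))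
  have hdc : ContDiff ℝ k (fun θ => deriv (circleMap 0 R) θ) := by
    have : (fun θ => deriv (circleMap 0 R) θ) = fun θ => circleMap 0 R θ * Complex.I :=
      funext fun θ => deriv_circleMap _ _ _
    rw [this]; exact hcm.mul contDiff_const
  have hinvc : ContDiff ℝ k (fun θ => (circleMap 0 R θ)⁻¹) := by
    rw [contDiff_iff_contDiffAt]
    intro θ
    exact (contDiffAt_inv ℝ (circleMap_ne_center hR.ne')).comp θ hcm.contDiffAt
  have hsm1 : ContDiff ℝ k (fun θ => circleMap 0 R θ • (1:EM n)) :=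
    ((@isBoundedBilinearMap_smul ℝ ℂ _ _ _ (EM n) _ _ _ _ emTowerA : IsBoundedBilinearMap ℝ fun p : ℂ × EM n => p.1 • p.2).contDiff).comp
      (hcm.prodMk contDiff_const)
  -- the two integrands
  set vP : ℝ → ℝ → EM n := fun θ s =>
    deriv (circleMap 0 R) θ • Ring.inverse (circleMap 0 R θ • (1:EM n) - L s) with hvP
  set vT : ℝ → ℝ → EM n := fun θ s =>
    deriv (circleMap 0 R) θ •
      ((circleMap 0 R θ)⁻¹ • Ring.inverse (L s - circleMap 0 R θ • (1:EM n))) with hvT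
  -- joint smoothness
  have hWP : ContDiffOn ℝ k (fun p : ℝ × ℝ => Ring.inverse (circleMap 0 R p.1 • (1:EM n) - L p.2))
      (univ ×ˢ I) := by
    intro p hp
    have hu : IsUnit (circleMap 0 R p.1 • (1:EM n) - L p.2) :=
      hresI p.2 hp.2 _ (by rw [norm_circleMap_zero, abs_of_pos hR])
    have hi : ContDiffAt ℝ k (Ring.inverse : EM n → EM n) (circleMap 0 R p.1 • (1:EM n) - L p.2) := by
      have := contDiffAt_ringInverse ℝ (n := k) hu.unit
      rwa [hu.unit_spec] at this
    have hin : ContDiffAt ℝ k (fun p : ℝ × ℝ => circleMap 0 R p.1 • (1:EM n) - L p.2) p :=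
      ((hsm1.comp contDiff_fst).sub (hL.comp contDiff_snd)).contDiffAt
    exact (hi.comp p hin).contDiffWithinAt
  have hWT : ContDiffOn ℝ k (fun p : ℝ × ℝ => Ring.inverse (L p.2 - circleMap 0 R p.1 • (1:EM n)))
      (univ ×ˢ I) := by
    intro p hp
    have hu : IsUnit (L p.2 - circleMap 0 R p.1 • (1:EM n)) := by
      have := hresI p.2 hp.2 _ (by rw [norm_circleMap_zero, abs_of_pos hR] :
        ‖circleMap 0 R p.1‖ = R)
      simpa [neg_sub] using this.neg
    have hi : ContDiffAt ℝ k (Ring.inverse : EM n → EM n) (L p.2 - circleMap 0 R p.1 • (1:EM n)) := by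
      have := contDiffAt_ringInverse ℝ (n := k) hu.unit
      rwa [hu.unit_spec] at this
    have hin : ContDiffAt ℝ k (fun p : ℝ × ℝ => L p.2 - circleMap 0 R p.1 • (1:EM n)) p :=
      ((hL.comp contDiff_snd).sub (hsm1.comp contDiff_fst)).contDiffAt
    exact (hi.comp p hin).contDiffWithinAt
  have hsmulE : ∀ {u : ℝ × ℝ → ℂ} {w : ℝ × ℝ → EM n}, ContDiff ℝ k u →
      ContDiffOn ℝ k w (univ ×ˢ I) → ContDiffOn ℝ k (fun p => u p • w p) (univ ×ˢ I) :=
    fun hu hw =>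
      ((@isBoundedBilinearMap_smul ℝ ℂ _ _ _ (EM n) _ _ _ _ emTowerA : IsBoundedBilinearMap ℝ fun p : ℂ × EM n =>
        p.1 • p.2).contDiff).comp_contDiffOn ((hu.contDiffOn).prodMk hw)
  have hvPj : ContDiffOn ℝ k (fun p : ℝ × ℝ => vP p.1 p.2) (univ ×ˢ I) :=
    hsmulE (hdc.comp contDiff_fst) hWP
  have hvTj : ContDiffOn ℝ k (fun p : ℝ × ℝ => vT p.1 p.2) (univ ×ˢ I) :=
    hsmulE (hdc.comp contDiff_fst) (hsmulE (hinvc.comp contDiff_fst) hWT)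
  -- slice vanishing
  have hs₀I : s₀ ∈ I := hIs₀
  have hvP0 : ∀ θ, ∀ j, 1 ≤ j → j ≤ k → iteratedDeriv j (fun s => vP θ s) s₀ = 0 := by
    intro θ
    have hu : IsUnit (circleMap 0 R θ • (1:EM n) - L s₀) :=
      hresI s₀ hs₀I _ (by rw [norm_circleMap_zero, abs_of_pos hR])
    have hi : ContDiffAt ℝ k (Ring.inverse : EM n → EM n) (circleMap 0 R θ • (1:EM n) - L s₀) := by
      have := contDiffAt_ringInverse ℝ (n := k) hu.unit
      rwa [hu.unit_spec] at this
    have hg : ContDiffAt ℝ k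
        (fun A : EM n => deriv (circleMap 0 R) θ • Ring.inverse (circleMap 0 R θ • (1:EM n) - A))
        (L s₀) := by
      exact ((hi.comp (L s₀) ((contDiff_const.sub contDiff_id).contDiffAt)).const_smul _)
    exact vanComp (g := fun A : EM n => deriv (circleMap 0 R) θ •
      Ring.inverse (circleMap 0 R θ • (1:EM n) - A)) (f := L) hg hL.contDiffAt hder
  have hvT0 : ∀ θ, ∀ j, 1 ≤ j → j ≤ k → iteratedDeriv j (fun s => vT θ s) s₀ = 0 := by
    intro θ
    have hu : IsUnit (L s₀ - circleMap 0 R θ • (1:EM n)) := by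
      have := hresI s₀ hs₀I _ (by rw [norm_circleMap_zero, abs_of_pos hR] :
        ‖circleMap 0 R θ‖ = R)
      simpa [neg_sub] using this.neg
    have hi : ContDiffAt ℝ k (Ring.inverse : EM n → EM n) (L s₀ - circleMap 0 R θ • (1:EM n)) := by
      have := contDiffAt_ringInverse ℝ (n := k) hu.unit
      rwa [hu.unit_spec] at this
    have hg : ContDiffAt ℝ k
        (fun A : EM n => deriv (circleMap 0 R) θ •
          ((circleMap 0 R θ)⁻¹ • Ring.inverse (A - circleMap 0 R θ • (1:EM n)))) (L s₀) := by
      have h0 : ContDiffAt ℝ k (fun A : EM n => Ring.inverse (A - circleMap 0 R θ • (1:EM n)))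
          (L s₀) := hi.comp (L s₀) ((contDiff_id.sub contDiff_const).contDiffAt)
      have h1 := h0.const_smul (circleMap 0 R θ)⁻¹
      exact h1.const_smul (deriv (circleMap 0 R) θ)
    exact vanComp (g := fun A : EM n => deriv (circleMap 0 R) θ •
      ((circleMap 0 R θ)⁻¹ • Ring.inverse (A - circleMap 0 R θ • (1:EM n)))) (f := L)
      hg hL.contDiffAt hder
  -- integrals
  obtain ⟨hPf_cd, hPf_van⟩ := vanInt s₀ k vP I hIopen hs₀I hvPj hvP0
  obtain ⟨hT_cd, hT_van⟩ := vanInt s₀ k vT I hIopen hs₀I hvTj hvT0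
  set Pf : ℝ → EM n := fun s => ∫ θ in (0:ℝ)..(2*Real.pi), vP θ s with hPf
  set T : ℝ → EM n := fun s => ∫ θ in (0:ℝ)..(2*Real.pi), vT θ s with hT
  have hPfeq : ∀ s, (∮ z in C(0, R), Ring.inverse (z • (1:EM n) - L s)) = Pf s := fun s => rfl
  have hTeq : ∀ s, (∮ z in C(0, R), z⁻¹ • Ring.inverse (L s - z • (1:EM n))) = T s := fun s => rfl
  -- regularity and vanishing of P and Q
  have hPev : P =ᶠ[𝓝 s₀] fun s => c0 • Pf s := by
    filter_upwards [hIopen.mem_nhds hs₀I] with s hs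
    rw [hPI s hs, hPfeq]
  have hsmul_cd : ContDiff ℝ k (fun X : EM n => c0 • X) :=
    ((@isBoundedBilinearMap_smul ℝ ℂ _ _ _ (EM n) _ _ _ _ emTowerA : IsBoundedBilinearMap ℝ fun p : ℂ × EM n =>
      p.1 • p.2).contDiff).comp (contDiff_const.prodMk contDiff_id)
  have hPf_cdAt : ContDiffAt ℝ k Pf s₀ := hPf_cd.contDiffAt (hIopen.mem_nhds hs₀I)
  have hT_cdAt : ContDiffAt ℝ k T s₀ := hT_cd.contDiffAt (hIopen.mem_nhds hs₀I)
  have hP_cd : ContDiffAt ℝ k P s₀ :=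
    ((hsmul_cd.contDiffAt).comp s₀ hPf_cdAt).congr_of_eventuallyEq hPev
  have hP_van : ∀ j, 1 ≤ j → j ≤ k → iteratedDeriv j P s₀ = 0 := by
    intro j hj1 hjk
    rw [iteratedDeriv_congr_nhds hPev]
    exact vanComp hsmul_cd.contDiffAt hPf_cdAt hPf_van j hj1 hjk
  set Qf : ℝ → EM n := fun s => 1 - P s with hQf
  have hsub_cd : ContDiff ℝ k (fun X : EM n => 1 - X) := contDiff_const.sub contDiff_id
  have hQ_cd : ContDiffAt ℝ k Qf s₀ := hsub_cd.contDiffAt.comp s₀ hP_cd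
  have hQ_van : ∀ j, 1 ≤ j → j ≤ k → iteratedDeriv j Qf s₀ = 0 :=
    vanComp hsub_cd.contDiffAt hP_cd hP_van
  -- the identity for S
  have hSev : S =ᶠ[𝓝 s₀] fun s => c0 • (Qf s ∘L T s ∘L Qf s) := by
    filter_upwards [hIopen.mem_nhds hs₀I] with s hs
    have h1 := stepI (M := Matrix (Fin n) (Fin n) ℂ) hR (L s) (1 - P s : EM n) (S s) (hresI s hs) (hgapI s hs) (hSI s hs)
    rw [h1, pullQ (M := Matrix (Fin n) (Fin n) ℂ) hR (L s) (1 - P s : EM n) (hresI s hs)]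
    rfl
  -- final assembly
  intro j hj1 hjk
  rw [iteratedDeriv_congr_nhds hSev]
  have hinner1_cd : ContDiffAt ℝ k (fun s => T s * Qf s) s₀ := hT_cdAt.mul hQ_cd
  have hinner1_van : ∀ j, 1 ≤ j → j ≤ k → iteratedDeriv j (fun s => T s * Qf s) s₀ = 0 :=
    vanB (ContinuousLinearMap.mul ℝ (EM n)) hT_cdAt hQ_cd hT_van hQ_van
  have hinner2_cd : ContDiffAt ℝ k (fun s => Qf s * (T s * Qf s)) s₀ := hQ_cd.mul hinner1_cd
  have hinner2_van : ∀ j, 1 ≤ j → j ≤ k →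
      iteratedDeriv j (fun s => Qf s * (T s * Qf s)) s₀ = 0 :=
    vanB (ContinuousLinearMap.mul ℝ (EM n)) hQ_cd hinner1_cd hQ_van hinner1_van
  have hfin := vanComp (g := fun X : EM n => c0 • X) (f := fun s => Qf s * (T s * Qf s))
    hsmul_cd.contDiffAt hinner2_cd hinner2_van j hj1 hjk
  exact hfin
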